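/- Let η be the standard Gaussian density η(y) = (1/√(2π)) e^{−y²/2}, and for m ≥ 1 define η*_m(y) = (−1)^{m−1} ∑_{j=1}^{m} c_{j,m} y^j η^{(j)}(y), where c_{j,m} are defined recursively by c_{1,1} = −1 and c_{j,m} = (2j/(m−1) − 4) c_{j,m−1} 1_{j<m} + (2/(m−1)) c_{j−1,m−1} 1_{j>1}. Then η*_m(y) = −c_{m,m} y^{2m} η(y) for all y ∈ ℝ; in particular η*_m(y) ≥ 0 for all y. -/

import Mathlib

/-- The coefficients `c_{j,m}` (here `ccoef m j`), defined by `c_{1,1} = -1` and, for `m ≥ 2`,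
`c_{j,m} = (2j/(m-1) - 4) c_{j,m-1} 1_{j<m} + (2/(m-1)) c_{j-1,m-1} 1_{j>1}`. -/
noncomputable def ccoef : ℕ → ℕ → ℝ
  | 0, _ => 0
  | 1, j => if j = 1 then -1 else 0
  | (m + 2), j =>
      (if j < m + 2 then (2 * (j : ℝ) / ((m : ℝ) + 1) - 4) * ccoef (m + 1) j else 0) +
      (if 1 < j then (2 / ((m : ℝ) + 1)) * ccoef (m + 1) (j - 1) else 0)

/-- The standard Gaussian density `η(y) = (1/√(2π)) e^{-y²/2}`. -/
noncomputable def gaussDensity (y : ℝ) : ℝ :=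
  (Real.sqrt (2 * Real.pi))⁻¹ * Real.exp (-y ^ 2 / 2)

/-- `η*_m(y) = (-1)^{m-1} ∑_{j=1}^m c_{j,m} y^j η^{(j)}(y)` for the Gaussian density `η`. -/
noncomputable def etaStar (m : ℕ) (y : ℝ) : ℝ :=
  (-1 : ℝ) ^ (m - 1) *
    ∑ j ∈ Finset.Icc 1 m, ccoef m j * y ^ j * iteratedDeriv j gaussDensity y

open Polynomial Finset

lemma ccoef_diag (k : ℕ) : ccoef (k+2) (k+2) = 2/((k:ℝ)+1) * ccoef (k+1) (k+1) := by
  simp [ccoef]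

lemma ccoef_diag_neg : ∀ m, 1 ≤ m → ccoef m m < 0 := by
  intro m hm
  induction m, hm using Nat.le_induction with
  | base => norm_num [ccoef]
  | succ m hm ih =>
    obtain ⟨k, rfl⟩ : ∃ k, m = k + 1 := ⟨m - 1, by omega⟩
    rw [ccoef_diag]
    have : (0:ℝ) < 2/((k:ℝ)+1) := by positivity
    nlinarith

lemma aeval_hermite_succ (j : ℕ) (y : ℝ) :
    (aeval y (hermite (j+1)) : ℝ) = y * aeval y (hermite j) - aeval y (derivative (hermite j)) := by
  rw [hermite_succ, map_sub, map_mul, aeval_X]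

lemma keyFun : ∀ m, 1 ≤ m → ∀ y : ℝ,
    (∑ j ∈ Finset.Icc 1 m, ccoef m j * (-1 : ℝ) ^ j * y ^ j * (aeval y (hermite j) : ℝ))
      = (-1 : ℝ) ^ m * ccoef m m * y ^ (2 * m) := by
  intro m hm
  induction m, hm using Nat.le_induction with
  | base =>
    intro y
    simp [ccoef, hermite_one]
    ring
  | succ m hm ih =>
    obtain ⟨k, rfl⟩ : ∃ k, m = k + 1 := ⟨m - 1, by omega⟩
    intro y
    have hk : ((k:ℝ) + 1) ≠ 0 := by positivity
    -- derivative of the induction hypothesis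
    have hder : (∑ j ∈ Icc 1 (k+1), ccoef (k+1) j * (-1:ℝ)^j *
          ((j:ℝ) * y^(j-1) * aeval y (hermite j) + y^j * aeval y (derivative (hermite j))))
        = (-1:ℝ)^(k+1) * ccoef (k+1) (k+1) * (2*((k:ℝ)+1)) * y^(2*(k+1)-1) := by
      have h1 : HasDerivAt (fun x : ℝ => ∑ j ∈ Icc 1 (k+1),
            ccoef (k+1) j * (-1:ℝ)^j * x^j * aeval x (hermite j))
          (∑ j ∈ Icc 1 (k+1), ccoef (k+1) j * (-1:ℝ)^j *
            ((j:ℝ) * y^(j-1) * aeval y (hermite j) + y^j * aeval y (derivative (hermite j)))) y := by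
        apply HasDerivAt.fun_sum
        intro j hj
        have h := ((hasDerivAt_pow j y).mul ((hermite j).hasDerivAt_aeval y)).const_mul
          (ccoef (k+1) j * (-1:ℝ)^j)
        have heq : (fun x : ℝ => ccoef (k+1) j * (-1:ℝ)^j * (x^j * aeval x (hermite j)))
            = fun x : ℝ => ccoef (k+1) j * (-1:ℝ)^j * x^j * aeval x (hermite j) := by
          funext x; ring
        simp only [Pi.mul_apply] at h; rw [heq] at h
        exact h
      have h2 : HasDerivAt (fun x : ℝ => ∑ j ∈ Icc 1 (k+1),
            ccoef (k+1) j * (-1:ℝ)^j * x^j * aeval x (hermite j))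
          ((-1:ℝ)^(k+1) * ccoef (k+1) (k+1) * (2*((k:ℝ)+1)) * y^(2*(k+1)-1)) y := by
        have heq : (fun x : ℝ => ∑ j ∈ Icc 1 (k+1),
              ccoef (k+1) j * (-1:ℝ)^j * x^j * aeval x (hermite j))
            = fun x : ℝ => (-1:ℝ)^(k+1) * ccoef (k+1) (k+1) * x^(2*(k+1)) :=
          funext ih
        rw [heq]
        have h := (hasDerivAt_pow (2*(k+1)) y).const_mul ((-1:ℝ)^(k+1) * ccoef (k+1) (k+1))
        refine h.congr_deriv ?_
        push_cast
        ring
      exact h1.unique h2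
    -- unfold ccoef at level k+2 and split the sum
    have hsplit : (∑ j ∈ Icc 1 (k+2), ccoef (k+2) j * (-1:ℝ)^j * y^j * aeval y (hermite j))
        = (∑ j ∈ Icc 1 (k+2),
            (if j < k + 2 then (2 * (j : ℝ) / ((k : ℝ) + 1) - 4) * ccoef (k + 1) j else 0)
              * (-1:ℝ)^j * y^j * aeval y (hermite j))
          + (∑ j ∈ Icc 1 (k+2),
            (if 1 < j then (2 / ((k : ℝ) + 1)) * ccoef (k + 1) (j - 1) else 0)
              * (-1:ℝ)^j * y^j * aeval y (hermite j)) := by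
      rw [← Finset.sum_add_distrib]
      refine Finset.sum_congr rfl fun j hj => ?_
      rw [show ccoef (k+2) j =
        (if j < k + 2 then (2 * (j : ℝ) / ((k : ℝ) + 1) - 4) * ccoef (k + 1) j else 0) +
        (if 1 < j then (2 / ((k : ℝ) + 1)) * ccoef (k + 1) (j - 1) else 0) from rfl]
      ring
    have hS1 : (∑ j ∈ Icc 1 (k+2),
          (if j < k + 2 then (2 * (j : ℝ) / ((k : ℝ) + 1) - 4) * ccoef (k + 1) j else 0)
            * (-1:ℝ)^j * y^j * aeval y (hermite j))
        = ∑ j ∈ Icc 1 (k+1), (2 * (j : ℝ) / ((k : ℝ) + 1) - 4) * ccoef (k + 1) j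
            * (-1:ℝ)^j * y^j * aeval y (hermite j) := by
      rw [show k + 2 = k + 1 + 1 from rfl, ← Finset.insert_Icc_right_eq_Icc_add_one (by omega : 1 ≤ k + 1 + 1),
        Finset.sum_insert (by simp)]
      rw [if_neg (by omega)]
      simp only [zero_mul, zero_add]
      refine Finset.sum_congr rfl fun j hj => ?_
      rw [if_pos (by simp [Finset.mem_Icc] at hj; omega)]
    have hS2 : (∑ j ∈ Icc 1 (k+2),
          (if 1 < j then (2 / ((k : ℝ) + 1)) * ccoef (k + 1) (j - 1) else 0)
            * (-1:ℝ)^j * y^j * aeval y (hermite j))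
        = ∑ j ∈ Icc 1 (k+1), (2 / ((k : ℝ) + 1)) * ccoef (k + 1) j
            * (-1:ℝ)^(j+1) * y^(j+1) * aeval y (hermite (j+1)) := by
      rw [← Finset.insert_Icc_add_one_left_eq_Icc (by omega : 1 ≤ k + 2),
        Finset.sum_insert (by simp)]
      rw [if_neg (by omega)]
      simp only [zero_mul, zero_add]
      rw [show Finset.Icc (1+1) (k+2) = (Finset.Icc 1 (k+1)).map (addRightEmbedding 1) by
        rw [Finset.map_add_right_Icc]]
      rw [Finset.sum_map]
      refine Finset.sum_congr rfl fun j hj => ?_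
      simp only [addRightEmbedding_apply]
      rw [if_pos (by simp [Finset.mem_Icc] at hj; omega)]
      simp
    rw [hsplit, hS1, hS2]
    have hcomb : (∑ j ∈ Icc 1 (k+1), (2 * (j : ℝ) / ((k : ℝ) + 1) - 4) * ccoef (k + 1) j
            * (-1:ℝ)^j * y^j * aeval y (hermite j))
          + (∑ j ∈ Icc 1 (k+1), (2 / ((k : ℝ) + 1)) * ccoef (k + 1) j
            * (-1:ℝ)^(j+1) * y^(j+1) * aeval y (hermite (j+1)))
        = (2/((k:ℝ)+1)) * y * (∑ j ∈ Icc 1 (k+1), ccoef (k+1) j * (-1:ℝ)^j *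
            ((j:ℝ) * y^(j-1) * aeval y (hermite j) + y^j * aeval y (derivative (hermite j))))
          - ((2/((k:ℝ)+1)) * y^2 + 4) * (∑ j ∈ Icc 1 (k+1),
            ccoef (k+1) j * (-1:ℝ)^j * y^j * aeval y (hermite j)) := by
      rw [Finset.mul_sum, Finset.mul_sum, ← Finset.sum_sub_distrib, ← Finset.sum_add_distrib]
      refine Finset.sum_congr rfl fun j hj => ?_
      obtain ⟨i, rfl⟩ : ∃ i, j = i + 1 := ⟨j - 1, by simp [Finset.mem_Icc] at hj; omega⟩
      rw [aeval_hermite_succ (i+1) y]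
      simp only [Nat.add_sub_cancel]
      push_cast
      field_simp
      ring
    rw [hcomb, hder, ih y, ccoef_diag]
    rw [show 2*(k+1)-1 = 2*k+1 from by omega, show 2*(k+1) = 2*k+2 from by omega,
      show 2*(k+2) = 2*k+4 from by omega]
    field_simp
    ring

lemma gaussDensity_pos (y : ℝ) : 0 < gaussDensity y := by
  rw [gaussDensity]
  positivity

lemma iteratedDeriv_const_mul' {n : ℕ} (c : ℝ) {f : ℝ → ℝ} (hf : ContDiff ℝ n f) (x : ℝ) :
    iteratedDeriv n (fun z => c * f z) x = c * iteratedDeriv n f x := by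
  simp only [← iteratedDerivWithin_univ]
  exact iteratedDerivWithin_const_mul (Set.mem_univ x) uniqueDiffOn_univ c hf.contDiffWithinAt

lemma iteratedDeriv_gaussDensity (j : ℕ) (y : ℝ) :
    iteratedDeriv j gaussDensity y
      = (-1:ℝ)^j * (aeval y (hermite j) : ℝ) * gaussDensity y := by
  have hg : gaussDensity = fun y : ℝ => (Real.sqrt (2 * Real.pi))⁻¹ * Real.exp (-(y^2/2)) := by
    funext y; rw [gaussDensity, neg_div]
  have hc : ContDiff ℝ j fun y : ℝ => Real.exp (-(y^2/2)) :=
    (((contDiff_id.pow 2).div_const 2).neg).exp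
  rw [hg, iteratedDeriv_const_mul' _ hc, iteratedDeriv_eq_iterate,
    deriv_gaussian_eq_hermite_mul_gaussian]
  ring

/-- For the standard Gaussian density `η` and every `m ≥ 1`,
`η*_m(y) = -c_{m,m} y^{2m} η(y)` for all `y`; in particular `η*_m(y) ≥ 0`. -/
theorem stmt4 (m : ℕ) (hm : 1 ≤ m) (y : ℝ) :
    etaStar m y = -(ccoef m m) * y ^ (2 * m) * gaussDensity y ∧ 0 ≤ etaStar m y := by
  have h1 : etaStar m y = -(ccoef m m) * y ^ (2 * m) * gaussDensity y := by
    rw [etaStar]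
    have hsum : (∑ j ∈ Finset.Icc 1 m, ccoef m j * y ^ j * iteratedDeriv j gaussDensity y)
        = (∑ j ∈ Finset.Icc 1 m, ccoef m j * (-1:ℝ)^j * y^j * aeval y (hermite j))
            * gaussDensity y := by
      rw [Finset.sum_mul]
      refine Finset.sum_congr rfl fun j _ => ?_
      rw [iteratedDeriv_gaussDensity]
      ring
    rw [hsum, keyFun m hm y]
    obtain ⟨k, rfl⟩ : ∃ k, m = k + 1 := ⟨m - 1, by omega⟩
    simp only [Nat.add_sub_cancel]
    have hsgn : (-1:ℝ)^k * (-1:ℝ)^(k+1) = -1 := by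
      rw [pow_succ, ← mul_assoc, ← mul_pow]
      norm_num
    linear_combination (ccoef (k+1) (k+1) * y^(2*(k+1)) * gaussDensity y) * hsgn
  refine ⟨h1, ?_⟩
  rw [h1]
  have h2 : ccoef m m < 0 := ccoef_diag_neg m hm
  have h3 : (0:ℝ) ≤ y ^ (2*m) := by
    rw [pow_mul]
    positivity
  have h4 : (0:ℝ) ≤ -ccoef m m := by linarith
  exact mul_nonneg (mul_nonneg h4 h3) (gaussDensity_pos y).le
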